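/- Let μ be a probability measure on ℝ^d with C := ∫_{ℝ^d} ‖ω‖² dμ(ω) < ∞, and define the kernel k(z1, z2) = ∫_{ℝ^d} cos(⟨ω, z1 − z2⟩) dμ(ω). Then for all z1, z2 ∈ ℝ^d, 0 ≤ k(z1, z1) + k(z2, z2) − 2·k(z1, z2) ≤ C·‖z1 − z2‖². -/

import Mathlib

open MeasureTheory Real
open scoped RealInnerProductSpace

/-- RKHS-distance bound for the random-feature kernel
`k(z₁,z₂) = ∫ cos⟨ω, z₁−z₂⟫ dμ(ω)` under the second-moment condition
`C = E‖ω‖² < ∞`: `0 ≤ k(z₁,z₁) + k(z₂,z₂) − 2k(z₁,z₂) ≤ C‖z₁ − z₂‖²`. -/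
theorem stmt_11 {d : ℕ} (μ : Measure (EuclideanSpace ℝ (Fin d))) [IsProbabilityMeasure μ]
    (hμ : Integrable (fun ω => ‖ω‖ ^ 2) μ)
    (C : ℝ) (hC : C = ∫ ω, ‖ω‖ ^ 2 ∂μ)
    (k : EuclideanSpace ℝ (Fin d) → EuclideanSpace ℝ (Fin d) → ℝ)
    (hk : ∀ z1 z2, k z1 z2 = ∫ ω, Real.cos ⟪ω, z1 - z2⟫ ∂μ)
    (z1 z2 : EuclideanSpace ℝ (Fin d)) :
    0 ≤ k z1 z1 + k z2 z2 - 2 * k z1 z2 ∧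
      k z1 z1 + k z2 z2 - 2 * k z1 z2 ≤ C * ‖z1 - z2‖ ^ 2 := by
  set z := z1 - z2 with hz
  have hdiag : ∀ w : EuclideanSpace ℝ (Fin d), k w w = 1 := by
    intro w
    rw [hk]
    simp [sub_self]
  have hcont : Continuous fun ω : EuclideanSpace ℝ (Fin d) => Real.cos ⟪ω, z⟫ :=
    Real.continuous_cos.comp (continuous_id.inner continuous_const)
  have hint_cos : Integrable (fun ω : EuclideanSpace ℝ (Fin d) => Real.cos ⟪ω, z⟫) μ := by
    refine Integrable.mono' (integrable_const 1) hcont.aestronglyMeasurable ?_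
    filter_upwards with ω
    exact Real.abs_cos_le_one _
  have key : k z1 z1 + k z2 z2 - 2 * k z1 z2 = 2 - 2 * ∫ ω, Real.cos ⟪ω, z⟫ ∂μ := by
    rw [hdiag, hdiag, hk]
    ring
  have hle1 : (∫ ω, Real.cos ⟪ω, z⟫ ∂μ) ≤ 1 := by
    calc (∫ ω, Real.cos ⟪ω, z⟫ ∂μ) ≤ ∫ _, (1 : ℝ) ∂μ := by
          refine integral_mono hint_cos (integrable_const 1) ?_
          intro ω; exact Real.cos_le_one _
      _ = 1 := by simp
  constructor
  · rw [key]; linarith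
  · rw [key]
    have hint_sq : Integrable (fun ω : EuclideanSpace ℝ (Fin d) => ⟪ω, z⟫ ^ 2) μ := by
      refine Integrable.mono' (hμ.mul_const (‖z‖ ^ 2)) ?_ ?_
      · exact ((continuous_id.inner (continuous_const (y := z))).pow 2).aestronglyMeasurable
      · filter_upwards with ω
        rw [Real.norm_eq_abs, abs_of_nonneg (sq_nonneg _)]
        calc ⟪ω, z⟫ ^ 2 ≤ (‖ω‖ * ‖z‖) ^ 2 := by
              have h1 := abs_real_inner_le_norm ω z
              calc ⟪ω, z⟫ ^ 2 = |⟪ω, z⟫| ^ 2 := (sq_abs _).symm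
                _ ≤ (‖ω‖ * ‖z‖) ^ 2 := by
                    apply pow_le_pow_left₀ (abs_nonneg _) h1
          _ = ‖ω‖ ^ 2 * ‖z‖ ^ 2 := by ring
    have step1 : 2 - 2 * (∫ ω, Real.cos ⟪ω, z⟫ ∂μ) ≤ ∫ ω, ⟪ω, z⟫ ^ 2 ∂μ := by
      have : (∫ ω, (1 - ⟪ω, z⟫ ^ 2 / 2) ∂μ) ≤ ∫ ω, Real.cos ⟪ω, z⟫ ∂μ := by
        refine integral_mono ((integrable_const 1).sub (hint_sq.div_const 2)) hint_cos ?_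
        intro ω
        exact Real.one_sub_sq_div_two_le_cos
      rw [integral_sub (integrable_const 1) (hint_sq.div_const 2), integral_div] at this
      simp only [integral_const, measure_univ, probReal_univ, ENNReal.toReal_one, smul_eq_mul, one_mul] at this
      linarith
    have step2 : (∫ ω, ⟪ω, z⟫ ^ 2 ∂μ) ≤ C * ‖z‖ ^ 2 := by
      rw [hC, ← integral_mul_const]
      refine integral_mono hint_sq (hμ.mul_const _) ?_
      intro ω
      calc ⟪ω, z⟫ ^ 2 = |⟪ω, z⟫| ^ 2 := (sq_abs _).symm
        _ ≤ (‖ω‖ * ‖z‖) ^ 2 := pow_le_pow_left₀ (abs_nonneg _) (abs_real_inner_le_norm ω z) 2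
        _ = ‖ω‖ ^ 2 * ‖z‖ ^ 2 := by ring
    linarith
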